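/- arXiv:2601.14169 — 3 statements merged into one kernel-verified Lean document; each statement's English description precedes it below -/
import Mathlib

section
/- Let F : ℝ^d → [F̲, F̄] be globally Lipschitz, bounded and strictly positive (0 < F̲ ≤ F̄), with Lipschitz constant Lip(F). Then with C_F := (1/F̲)(1 + F̄/F̲)(Lip(F) + 2F̄), for any probability measures f, g on ℝ^d, W₁^∧(F f / ⟨F,f⟩, F g / ⟨F,g⟩) ≤ C_F · W₁^∧(f, g), where F f / ⟨F,f⟩ denotes the reweighted probability measure with density F/⟨F,f⟩ with respect to f. -/
open MeasureTheory ProbabilityTheory Set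
open scoped ENNReal NNReal

noncomputable section

/-- `ℝ^d` with the Euclidean norm. -/
abbrev Euc (d : ℕ) := EuclideanSpace ℝ (Fin d)

/-- The standard Gaussian measure `N(0, I_d)` on `ℝ^d`. -/
def stdGaussian (d : ℕ) : Measure (Euc d) :=
  (Measure.pi fun _ : Fin d => gaussianReal 0 1).map
    (MeasurableEquiv.toLp 2 (Fin d → ℝ))

/-- The uniform probability measure on the cube `[0,1]^d`. -/
def unifCube (d : ℕ) : Measure (Euc d) :=
  (Measure.pi fun _ : Fin d => volume.restrict (Set.Icc (0:ℝ) 1)).map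
    (MeasurableEquiv.toLp 2 (Fin d → ℝ))

/-- The uniform probability measure on `[0,N)`. -/
def unifIco (N : ℕ) : Measure ℝ :=
  ((N : ℝ≥0∞))⁻¹ • volume.restrict (Set.Ico (0:ℝ) (N:ℝ))

/-- The Bernoulli measure `(1-τ)δ₀ + τδ₁` on `ℝ`. -/
def bern (τ : ℝ) : Measure ℝ :=
  ENNReal.ofReal (1 - τ) • Measure.dirac (0:ℝ) + ENNReal.ofReal τ • Measure.dirac 1

/-- Crossover-mutation update: `x' = (1-γ)⊙x + γ⊙x* + σξ` (componentwise product). -/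
def crossover {d : ℕ} (γ ξ : Euc d) (σ : ℝ) (x xs : Euc d) : Euc d :=
  WithLp.toLp 2 fun i => (1 - γ i) * x i + γ i * xs i + σ * ξ i

/-- The reweighted probability measure `F f / ⟨F, f⟩`. -/
def reweight {d : ℕ} (F : Euc d → ℝ) (f : Measure (Euc d)) : Measure (Euc d) :=
  f.withDensity fun x => ENNReal.ofReal (F x / ∫ y, F y ∂f)

/-- The gain operator `Q⁺(f,f)`: the law of `(1-γ)⊙x + γ⊙x* + σξ` where `x, x*` are
independent with law `F f/⟨F,f⟩`, `γ ~ Unif[0,1]^d` and `ξ ~ N(0,I_d)`. -/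
def Qplus {d : ℕ} (F : Euc d → ℝ) (σ : ℝ) (f : Measure (Euc d)) : Measure (Euc d) :=
  ((((reweight F f).prod (reweight F f)).prod ((unifCube d).prod (stdGaussian d))).map
    fun p => crossover p.2.1 p.2.2 σ p.1.1 p.1.2)

/-- Bounded-Lipschitz (BL) norm of `f - g`:
`sup {∫φ df - ∫φ dg : Lip(φ) ≤ 1, ‖φ‖_∞ ≤ 1/2}`. -/
def blDist {d : ℕ} (f g : Measure (Euc d)) : ℝ :=
  sSup {r | ∃ φ : Euc d → ℝ, LipschitzWith 1 φ ∧ (∀ x, |φ x| ≤ 1/2) ∧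
    r = (∫ x, φ x ∂f) - ∫ x, φ x ∂g}

/-- `W₁^∧(f,g)`: Wasserstein-1 distance with truncated cost `min(|x-y|,1)`. -/
def W1trunc {d : ℕ} (f g : Measure (Euc d)) : ℝ :=
  sInf {r | ∃ pl : Measure (Euc d × Euc d), IsProbabilityMeasure pl ∧
    pl.map Prod.fst = f ∧ pl.map Prod.snd = g ∧
    r = ∫ z, min (dist z.1 z.2) 1 ∂pl}

/-- `W₁(f,g)`: Wasserstein-1 distance with cost `|x-y|`. -/
def W1 {d : ℕ} (f g : Measure (Euc d)) : ℝ :=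
  sInf {r | ∃ pl : Measure (Euc d × Euc d), IsProbabilityMeasure pl ∧
    pl.map Prod.fst = f ∧ pl.map Prod.snd = g ∧
    r = ∫ z, dist z.1 z.2 ∂pl}

/-- The Fournier–Guillin rate `ε₁(N)`. -/
def rate (d N : ℕ) : ℝ :=
  if d = 1 then (N : ℝ) ^ (-(1/2 : ℝ))
  else if d = 2 then (N : ℝ) ^ (-(1/2 : ℝ)) * Real.log (1 + N)
  else (N : ℝ) ^ (-(1 / (d : ℝ)))

/-- The `q`-th moment `M_q(f) = ∫ |x|^q f(dx)`. -/
def Mq {d : ℕ} (q : ℝ) (f : Measure (Euc d)) : ℝ := ∫ x, ‖x‖ ^ q ∂f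

/-- Moment assumption on `q`: `q > 2` for `d ≤ 2`, `q ≥ d/(d-1)` for `d > 2`. -/
def momentCond (d : ℕ) (q : ℝ) : Prop :=
  (d ≤ 2 → 2 < q) ∧ (2 < d → (d : ℝ) / ((d : ℝ) - 1) ≤ q)

/-- Index map `j(w,α) := min { j : α < N ∑_{ℓ ≤ j} w^ℓ }`. -/
def idxMap {N : ℕ} (hN : 0 < N) (w : Fin N → ℝ) (α : ℝ) : Fin N :=
  if h : (Finset.univ.filter fun j : Fin N => α < N * ∑ ℓ ∈ Finset.Iic j, w ℓ).Nonempty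
  then (Finset.univ.filter fun j : Fin N => α < N * ∑ ℓ ∈ Finset.Iic j, w ℓ).min' h
  else ⟨0, hN⟩

/-- Fitness-proportional weights `w^i = F(x^i)/∑_ℓ F(x^ℓ)`. -/
def gaWeights {d N : ℕ} (F : Euc d → ℝ) (x : Fin N → Euc d) : Fin N → ℝ :=
  fun i => F (x i) / ∑ ℓ, F (x ℓ)

/-- Empirical measure `(1/N) ∑ δ_{x^i}`. -/
def empMeas {d N : ℕ} (x : Fin N → Euc d) : Measure (Euc d) :=
  ((N : ℝ≥0∞))⁻¹ • ∑ i, Measure.dirac (x i)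

/-- Weighted empirical measure `∑ w^i δ_{x^i}`. -/
def wEmpMeas {d N : ℕ} (w : Fin N → ℝ) (x : Fin N → Euc d) : Measure (Euc d) :=
  ∑ i, ENNReal.ofReal (w i) • Measure.dirac (x i)

lemma map_withDensity_comp {α β : Type*} [MeasurableSpace α] [MeasurableSpace β]
    (π : Measure α) {T : α → β} (hT : Measurable T) {h : β → ℝ≥0∞} (hh : Measurable h) :
    (π.withDensity (fun z => h (T z))).map T = (π.map T).withDensity h := by
  ext s hs
  rw [Measure.map_apply hT hs, withDensity_apply _ (hT hs), withDensity_apply _ hs,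
    setLIntegral_map hs hh hT]

lemma integrable_of_bounded {α : Type*} [MeasurableSpace α] {μ : Measure α} [IsFiniteMeasure μ]
    {g : α → ℝ} (hg : AEStronglyMeasurable g μ) {C : ℝ} (hC : ∀ x, |g x| ≤ C) :
    Integrable g μ :=
  Integrable.mono' (integrable_const C) hg
    (Filter.Eventually.of_forall fun x => by rw [Real.norm_eq_abs]; exact hC x)

set_option maxHeartbeats 2000000 in
lemma selection_key (d : ℕ) (F : Euc d → ℝ) (L Fl Fu : ℝ)
    (hL : 0 ≤ L) (hFlip : ∀ x y, |F x - F y| ≤ L * dist x y)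
    (hFmem : ∀ x, F x ∈ Set.Icc Fl Fu) (hFl : 0 < Fl) (hFlu : Fl ≤ Fu)
    (f g : Measure (Euc d)) (hf : IsProbabilityMeasure f) (hg : IsProbabilityMeasure g)
    (π : Measure (Euc d × Euc d)) (hπP : IsProbabilityMeasure π)
    (hπ1 : π.map Prod.fst = f) (hπ2 : π.map Prod.snd = g) :
    W1trunc (reweight F f) (reweight F g) ≤
      (1 / Fl) * (1 + Fu / Fl) * (L + 2 * Fu) * ∫ z, min (dist z.1 z.2) 1 ∂π := by
  have hFu : 0 < Fu := lt_of_lt_of_le hFl hFlu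
  have hFc : Continuous F := by
    have : LipschitzWith ⟨L, hL⟩ F :=
      LipschitzWith.of_dist_le_mul fun x y => by
        rw [Real.dist_eq]; exact hFlip x y
    exact this.continuous
  have hFabs : ∀ x, |F x| ≤ Fu := fun x =>
    abs_le.2 ⟨le_trans (by linarith) (hFmem x).1, (hFmem x).2⟩
  -- integrability of F
  have hFif : Integrable F f := integrable_of_bounded hFc.aestronglyMeasurable hFabs
  have hFig : Integrable F g := integrable_of_bounded hFc.aestronglyMeasurable hFabs
  set a := ∫ y, F y ∂f with ha
  set b := ∫ y, F y ∂g with hb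
  have haFl : Fl ≤ a := by
    have := integral_mono (μ := f) (integrable_const Fl) hFif (fun x => (hFmem x).1)
    simpa using this
  have haFu : a ≤ Fu := by
    have := integral_mono (μ := f) hFif (integrable_const Fu) (fun x => (hFmem x).2)
    simpa using this
  have hbFl : Fl ≤ b := by
    have := integral_mono (μ := g) (integrable_const Fl) hFig (fun x => (hFmem x).1)
    simpa using this
  have hbFu : b ≤ Fu := by
    have := integral_mono (μ := g) hFig (integrable_const Fu) (fun x => (hFmem x).2)
    simpa using this
  have ha0 : 0 < a := lt_of_lt_of_le hFl haFl
  have hb0 : 0 < b := lt_of_lt_of_le hFl hbFl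
  -- cost function
  set c : Euc d × Euc d → ℝ := fun z => min (dist z.1 z.2) 1 with hc
  have hccont : Continuous c := (continuous_fst.dist continuous_snd).min continuous_const
  have hc0 : ∀ z, 0 ≤ c z := fun z => le_min dist_nonneg zero_le_one
  have hc1 : ∀ z, c z ≤ 1 := fun z => min_le_right _ _
  have hcabs : ∀ z, |c z| ≤ 1 := fun z => abs_le.2 ⟨by linarith [hc0 z], hc1 z⟩
  set r := ∫ z, c z ∂π with hr
  have hcint : Integrable c π := integrable_of_bounded hccont.aestronglyMeasurable hcabs
  have hr0 : 0 ≤ r := integral_nonneg hc0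
  -- |F z.1 - F z.2| ≤ (L+Fu) * c z pointwise
  have hFc_pt : ∀ z : Euc d × Euc d, |F z.1 - F z.2| ≤ (L + Fu) * c z := by
    intro z
    rcases le_or_gt (dist z.1 z.2) 1 with h | h
    · have : c z = dist z.1 z.2 := min_eq_left h
      rw [this]
      calc |F z.1 - F z.2| ≤ L * dist z.1 z.2 := hFlip _ _
        _ ≤ (L + Fu) * dist z.1 z.2 := by nlinarith [dist_nonneg (x := z.1) (y := z.2)]
    · have : c z = 1 := min_eq_right h.le
      rw [this, mul_one]
      have h1 := (hFmem z.1).1; have h2 := (hFmem z.1).2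
      have h3 := (hFmem z.2).1; have h4 := (hFmem z.2).2
      rw [abs_sub_le_iff]; constructor <;> linarith
  have hFfst_int : Integrable (fun z : Euc d × Euc d => F z.1) π :=
    integrable_of_bounded ((hFc.comp continuous_fst).aestronglyMeasurable) (fun z => hFabs z.1)
  have hFsnd_int : Integrable (fun z : Euc d × Euc d => F z.2) π :=
    integrable_of_bounded ((hFc.comp continuous_snd).aestronglyMeasurable) (fun z => hFabs z.2)
  have habs_int : Integrable (fun z : Euc d × Euc d => |F z.1 - F z.2|) π :=
    integrable_of_bounded (((hFc.comp continuous_fst).sub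
      (hFc.comp continuous_snd)).abs.aestronglyMeasurable) (C := 2 * Fu)
      (fun z => by
        rw [abs_abs]
        calc |F z.1 - F z.2| ≤ |F z.1| + |F z.2| := abs_sub _ _
          _ ≤ 2 * Fu := by linarith [hFabs z.1, hFabs z.2])
  have hab : |a - b| ≤ (L + Fu) * r := by
    have haπ : a = ∫ z, F z.1 ∂π := by
      rw [ha, ← hπ1, integral_map measurable_fst.aemeasurable hFc.aestronglyMeasurable]
    have hbπ : b = ∫ z, F z.2 ∂π := by
      rw [hb, ← hπ2, integral_map measurable_snd.aemeasurable hFc.aestronglyMeasurable]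
    rw [haπ, hbπ, ← integral_sub hFfst_int hFsnd_int]
    have habs : |∫ z, (F z.1 - F z.2) ∂π| ≤ ∫ z, |F z.1 - F z.2| ∂π := by
      simpa [Real.norm_eq_abs] using
        norm_integral_le_integral_norm (μ := π) (f := fun z : Euc d × Euc d => F z.1 - F z.2)
    calc |∫ z, (F z.1 - F z.2) ∂π| ≤ ∫ z, |F z.1 - F z.2| ∂π := habs
      _ ≤ ∫ z, (L + Fu) * c z ∂π :=
          integral_mono habs_int (hcint.const_mul _) hFc_pt
      _ = (L + Fu) * r := integral_const_mul _ _

  -- expressions of a, b as integrals over π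
  have haπ : a = ∫ z, F z.1 ∂π := by
    rw [ha, ← hπ1, integral_map measurable_fst.aemeasurable hFc.aestronglyMeasurable]
  have hbπ : b = ∫ z, F z.2 ∂π := by
    rw [hb, ← hπ2, integral_map measurable_snd.aemeasurable hFc.aestronglyMeasurable]
  -- the coupling density
  set m : Euc d × Euc d → ℝ := fun z => min (F z.1 / a) (F z.2 / b) with hm
  have hmcont : Continuous m :=
    ((hFc.comp continuous_fst).div_const a).min ((hFc.comp continuous_snd).div_const b)
  have hm0 : ∀ z, 0 ≤ m z := fun z =>
    le_min (div_nonneg (by linarith [(hFmem z.1).1]) ha0.le)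
      (div_nonneg (by linarith [(hFmem z.2).1]) hb0.le)
  have hmub : ∀ z, m z ≤ Fu / Fl := fun z =>
    le_trans (min_le_left _ _) (div_le_div₀ (by positivity) (hFmem z.1).2 hFl haFl)
  have hmint : Integrable m π := integrable_of_bounded hmcont.aestronglyMeasurable
    (C := Fu / Fl) (fun z => by rw [abs_of_nonneg (hm0 z)]; exact hmub z)
  set π₁ := π.withDensity (fun z => ENNReal.ofReal (m z)) with hπ₁
  -- converting integrals against π₁ to integrals against π
  have hconv : ∀ φ : Euc d × Euc d → ℝ, ∫ z, φ z ∂π₁ = ∫ z, m z * φ z ∂π := by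
    intro φ
    have hmeas : Measurable fun z => (m z).toNNReal := hmcont.measurable.real_toNNReal
    have hrw : (fun z => ENNReal.ofReal (m z)) = fun z => ((m z).toNNReal : ℝ≥0∞) := rfl
    rw [hπ₁, hrw, integral_withDensity_eq_integral_smul hmeas]
    congr 1; ext z
    rw [NNReal.smul_def, Real.coe_toNNReal _ (hm0 z), smul_eq_mul]
  set I := ∫ z, m z ∂π with hI
  have hπ₁univ : π₁ univ = ENNReal.ofReal I := by
    rw [hπ₁, withDensity_apply _ MeasurableSet.univ, setLIntegral_univ,
      ← ofReal_integral_eq_lintegral_ofReal hmint (Filter.Eventually.of_forall hm0)]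
  have hint1 : ∫ z, F z.1 / a ∂π = 1 := by
    rw [integral_div, ← haπ, div_self ha0.ne']
  have hI1 : I ≤ 1 := by
    rw [hI, ← hint1]
    exact integral_mono hmint (hFfst_int.div_const a) (fun z => min_le_left _ _)
  have hI0 : 0 ≤ I := integral_nonneg hm0
  -- first cost bound
  have hmc_int : Integrable (fun z => m z * c z) π :=
    integrable_of_bounded (hmcont.mul hccont).aestronglyMeasurable (C := Fu / Fl)
      (fun z => by
        rw [abs_of_nonneg (mul_nonneg (hm0 z) (hc0 z))]
        calc m z * c z ≤ (Fu / Fl) * 1 :=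
              mul_le_mul (hmub z) (hc1 z) (hc0 z) (by positivity)
          _ = Fu / Fl := mul_one _)
  have hcost1 : ∫ z, c z ∂π₁ ≤ (Fu / Fl) * r := by
    rw [hconv c]
    calc ∫ z, m z * c z ∂π ≤ ∫ z, (Fu / Fl) * c z ∂π :=
          integral_mono hmc_int (hcint.const_mul _)
            (fun z => mul_le_mul_of_nonneg_right (hmub z) (hc0 z))
      _ = (Fu / Fl) * r := integral_const_mul _ _
  -- leftover mass bound
  have hεbound : 1 - I ≤ (L + Fu) / Fl * r + Fu / Fl ^ 2 * ((L + Fu) * r) := by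
    have h1 : 1 - I = ∫ z, (F z.1 / a - m z) ∂π := by
      rw [integral_sub (hFfst_int.div_const a) hmint, hint1, hI]
    have hpt : ∀ z : Euc d × Euc d,
        F z.1 / a - m z ≤ |F z.1 - F z.2| / Fl + Fu / Fl ^ 2 * |a - b| := by
      intro z
      have key1 : F z.1 / a - m z ≤ |F z.1 / a - F z.2 / b| := by
        rcases min_le_iff.mp (le_refl (m z)) with _ | _
        all_goals
          rcases le_total (F z.1 / a) (F z.2 / b) with hle | hle
          · rw [hm]; simp only [min_eq_left hle]
            simpa using abs_nonneg (F z.1 / a - F z.2 / b)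
          · rw [hm]; simp only [min_eq_right hle]
            exact le_abs_self _
      have hid : F z.1 / a - F z.2 / b = (F z.1 - F z.2) / a + F z.2 * (b - a) / (a * b) := by
        field_simp; ring
      have key2 : |F z.1 / a - F z.2 / b| ≤ |F z.1 - F z.2| / Fl + Fu / Fl ^ 2 * |a - b| := by
        calc |F z.1 / a - F z.2 / b|
            ≤ |(F z.1 - F z.2) / a| + |F z.2 * (b - a) / (a * b)| := by
              rw [hid]; exact abs_add_le _ _
          _ = |F z.1 - F z.2| / a + |F z.2| * |b - a| / (a * b) := by
              rw [abs_div, abs_div, abs_mul, abs_mul, abs_of_pos ha0, abs_of_pos hb0]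
          _ ≤ |F z.1 - F z.2| / Fl + Fu * |a - b| / (Fl * Fl) := by
              rw [abs_sub_comm b a]
              gcongr <;> first | exact abs_nonneg _ | exact hFabs z.2 | positivity
          _ = |F z.1 - F z.2| / Fl + Fu / Fl ^ 2 * |a - b| := by ring
      exact key1.trans key2
    rw [h1]
    calc ∫ z, (F z.1 / a - m z) ∂π
        ≤ ∫ z, (|F z.1 - F z.2| / Fl + Fu / Fl ^ 2 * |a - b|) ∂π :=
          integral_mono ((hFfst_int.div_const a).sub hmint)
            ((habs_int.div_const Fl).add (integrable_const _)) hpt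
      _ = (∫ z, |F z.1 - F z.2| ∂π) / Fl + Fu / Fl ^ 2 * |a - b| := by
          rw [integral_add (habs_int.div_const Fl) (integrable_const _),
            integral_div, integral_const]
          simp
      _ ≤ ((L + Fu) * r) / Fl + Fu / Fl ^ 2 * ((L + Fu) * r) := by
          gcongr
          · calc (∫ z, |F z.1 - F z.2| ∂π) ≤ ∫ z, (L + Fu) * c z ∂π :=
                integral_mono habs_int (hcint.const_mul _) hFc_pt
              _ = (L + Fu) * r := integral_const_mul _ _
      _ = (L + Fu) / Fl * r + Fu / Fl ^ 2 * ((L + Fu) * r) := by ring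

  -- the reweighted measures are probability measures
  have hrwP : ∀ (h : Measure (Euc d)) (hP : IsProbabilityMeasure h) (hint : Integrable F h)
      (hv : (0:ℝ) < ∫ y, F y ∂h), IsProbabilityMeasure (reweight F h) := by
    intro h hP hint hv
    constructor
    rw [reweight, withDensity_apply _ MeasurableSet.univ, setLIntegral_univ,
      ← ofReal_integral_eq_lintegral_ofReal (hint.div_const _)
        (Filter.Eventually.of_forall (fun x => div_nonneg (le_trans hFl.le (hFmem x).1) hv.le)),
      integral_div, div_self hv.ne', ENNReal.ofReal_one]
  have hrwf : IsProbabilityMeasure (reweight F f) := hrwP f hf hFif (ha ▸ ha0)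
  have hrwg : IsProbabilityMeasure (reweight F g) := hrwP g hg hFig (hb ▸ hb0)
  -- marginals of π₁ are dominated by the reweighted measures
  have hid1 : (π.withDensity (fun z => ENNReal.ofReal (F z.1 / a))).map Prod.fst
      = reweight F f := by
    rw [map_withDensity_comp π measurable_fst ((hFc.measurable.div_const a).ennreal_ofReal),
      hπ1, reweight, ← ha]
  have hid2 : (π.withDensity (fun z => ENNReal.ofReal (F z.2 / b))).map Prod.snd
      = reweight F g := by
    rw [map_withDensity_comp π measurable_snd ((hFc.measurable.div_const b).ennreal_ofReal),
      hπ2, reweight, ← hb]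
  have hp₁le : π₁.map Prod.fst ≤ reweight F f := by
    rw [← hid1]
    exact Measure.map_mono (withDensity_mono (Filter.Eventually.of_forall
      (fun z => ENNReal.ofReal_le_ofReal (min_le_left _ _)))) measurable_fst
  have hp₂le : π₁.map Prod.snd ≤ reweight F g := by
    rw [← hid2]
    exact Measure.map_mono (withDensity_mono (Filter.Eventually.of_forall
      (fun z => ENNReal.ofReal_le_ofReal (min_le_right _ _)))) measurable_snd
  haveI : IsFiniteMeasure π₁ := ⟨by rw [hπ₁univ]; exact ENNReal.ofReal_lt_top⟩
  haveI : IsFiniteMeasure (π₁.map Prod.fst) := isFiniteMeasure_of_le _ hp₁le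
  haveI : IsFiniteMeasure (π₁.map Prod.snd) := isFiniteMeasure_of_le _ hp₂le
  set μ' := reweight F f - π₁.map Prod.fst with hμ'
  set ν' := reweight F g - π₁.map Prod.snd with hν'
  haveI : IsFiniteMeasure μ' := isFiniteMeasure_of_le _ Measure.sub_le
  haveI : IsFiniteMeasure ν' := isFiniteMeasure_of_le _ Measure.sub_le
  set εe := (1 : ℝ≥0∞) - ENNReal.ofReal I with hεe
  have hμ'univ : μ' univ = εe := by
    rw [hμ', Measure.sub_apply MeasurableSet.univ hp₁le,
      Measure.map_apply measurable_fst MeasurableSet.univ, preimage_univ, hπ₁univ,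
      measure_univ, hεe]
  have hν'univ : ν' univ = εe := by
    rw [hν', Measure.sub_apply MeasurableSet.univ hp₂le,
      Measure.map_apply measurable_snd MeasurableSet.univ, preimage_univ, hπ₁univ,
      measure_univ, hεe]
  have hεe_ne_top : εe ≠ ⊤ := by
    rw [hεe]
    exact ne_top_of_le_ne_top ENNReal.one_ne_top tsub_le_self
  have hεtoReal : εe.toReal = 1 - I := by
    rw [hεe, ENNReal.toReal_sub_of_le (ENNReal.ofReal_le_one.2 hI1) ENNReal.one_ne_top,
      ENNReal.toReal_one, ENNReal.toReal_ofReal hI0]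
  set ρ := π₁ + εe⁻¹ • (μ'.prod ν') with hρ
  have hcμ' : μ' + π₁.map Prod.fst = reweight F f := Measure.sub_add_cancel_of_le hp₁le
  have hcν' : ν' + π₁.map Prod.snd = reweight F g := Measure.sub_add_cancel_of_le hp₂le
  have hρ1 : ρ.map Prod.fst = reweight F f := by
    rw [hρ, Measure.map_add _ _ measurable_fst, Measure.map_smul, Measure.map_fst_prod,
      hν'univ]
    rcases eq_or_ne εe 0 with h0 | h0
    · have hμ'0 : μ' = 0 := Measure.measure_univ_eq_zero.mp (by rw [hμ'univ, h0])
      rw [hμ'0] at hcμ' ⊢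
      simp only [smul_zero, add_zero]
      rw [← hcμ', zero_add]
    · rw [smul_smul, ENNReal.inv_mul_cancel h0 hεe_ne_top, one_smul, add_comm]
      exact hcμ'
  have hρ2 : ρ.map Prod.snd = reweight F g := by
    rw [hρ, Measure.map_add _ _ measurable_snd, Measure.map_smul, Measure.map_snd_prod,
      hμ'univ]
    rcases eq_or_ne εe 0 with h0 | h0
    · have hν'0 : ν' = 0 := Measure.measure_univ_eq_zero.mp (by rw [hν'univ, h0])
      rw [hν'0] at hcν' ⊢
      simp only [smul_zero, add_zero]
      rw [← hcν', zero_add]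
    · rw [smul_smul, ENNReal.inv_mul_cancel h0 hεe_ne_top, one_smul, add_comm]
      exact hcν'
  haveI hρP : IsProbabilityMeasure ρ := by
    constructor
    have huniv : ρ univ = (ρ.map Prod.fst) univ := by
      rw [Measure.map_apply measurable_fst MeasurableSet.univ, preimage_univ]
    rw [huniv, hρ1, measure_univ]
  -- the W1trunc bound via this coupling
  have hcρint : Integrable c ρ := integrable_of_bounded hccont.aestronglyMeasurable hcabs
  have hW : W1trunc (reweight F f) (reweight F g) ≤ ∫ z, c z ∂ρ := by
    apply csInf_le
    · refine ⟨0, ?_⟩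
      rintro x ⟨pl, hpl, -, -, rfl⟩
      exact integral_nonneg (fun z => le_min dist_nonneg zero_le_one)
    · exact ⟨ρ, hρP, hρ1, hρ2, by rw [hc]⟩
  have hsplit : ∫ z, c z ∂ρ = ∫ z, c z ∂π₁ + ∫ z, c z ∂(εe⁻¹ • (μ'.prod ν')) := by
    have hle1 : π₁ ≤ ρ := by rw [hρ]; exact Measure.le_add_right le_rfl
    have hle2 : εe⁻¹ • (μ'.prod ν') ≤ ρ := by rw [hρ]; exact Measure.le_add_left le_rfl
    rw [hρ]
    exact integral_add_measure (hcρint.mono_measure hle1) (hcρint.mono_measure hle2)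
  have hterm2 : ∫ z, c z ∂(εe⁻¹ • (μ'.prod ν')) ≤ εe.toReal := by
    rw [integral_smul_measure]
    rcases eq_or_ne εe 0 with h0 | h0
    · have hμ'0 : μ' = 0 := Measure.measure_univ_eq_zero.mp (by rw [hμ'univ, h0])
      rw [hμ'0, Measure.zero_prod, integral_zero_measure, smul_zero]
      exact ENNReal.toReal_nonneg
    · have hεR : εe.toReal ≠ 0 := ENNReal.toReal_ne_zero.mpr ⟨h0, hεe_ne_top⟩
      have hcσint : Integrable c (μ'.prod ν') :=
        integrable_of_bounded hccont.aestronglyMeasurable hcabs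
      have h1 : ∫ z, c z ∂(μ'.prod ν') ≤ (εe * εe).toReal := by
        calc ∫ z, c z ∂(μ'.prod ν') ≤ ∫ _, (1:ℝ) ∂(μ'.prod ν') :=
              integral_mono hcσint (integrable_const 1) hc1
          _ = ((μ'.prod ν') univ).toReal := by simp; rfl
          _ = (εe * εe).toReal := by
              rw [← univ_prod_univ, Measure.prod_prod, hμ'univ, hν'univ]
      have h2 : 0 ≤ ∫ z, c z ∂(μ'.prod ν') := integral_nonneg hc0
      calc εe⁻¹.toReal • ∫ z, c z ∂(μ'.prod ν') ≤ εe⁻¹.toReal * (εe * εe).toReal := by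
            rw [smul_eq_mul]
            exact mul_le_mul_of_nonneg_left h1 ENNReal.toReal_nonneg
        _ = εe.toReal := by
            rw [ENNReal.toReal_mul, ENNReal.toReal_inv]
            field_simp
  calc W1trunc (reweight F f) (reweight F g) ≤ ∫ z, c z ∂ρ := hW
    _ = ∫ z, c z ∂π₁ + ∫ z, c z ∂(εe⁻¹ • (μ'.prod ν')) := hsplit
    _ ≤ Fu / Fl * r + εe.toReal := add_le_add hcost1 hterm2
    _ ≤ Fu / Fl * r + ((L + Fu) / Fl * r + Fu / Fl ^ 2 * ((L + Fu) * r)) := by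
        rw [hεtoReal]; linarith [hεbound]
    _ ≤ (1 / Fl) * (1 + Fu / Fl) * (L + 2 * Fu) * r := by
        have hkey : (1 / Fl) * (1 + Fu / Fl) * (L + 2 * Fu) * r
            - (Fu / Fl * r + ((L + Fu) / Fl * r + Fu / Fl ^ 2 * ((L + Fu) * r)))
            = Fu ^ 2 * r / Fl ^ 2 := by
          field_simp
          ring
        have : (0:ℝ) ≤ Fu ^ 2 * r / Fl ^ 2 := by positivity
        linarith

/-- **Lemma (selection stability).** For `F : ℝ^d → [F̲,F̄]` Lipschitz with constant `L`,
with `C_F := (1/F̲)(1 + F̄/F̲)(L + 2F̄)`, for any probability measures `f, g`: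
`W₁^∧(F f/⟨F,f⟩, F g/⟨F,g⟩) ≤ C_F W₁^∧(f,g)`. -/
theorem selection_stability (d : ℕ) (F : Euc d → ℝ) (L Fl Fu : ℝ)
    (hL : 0 ≤ L) (hFlip : ∀ x y, |F x - F y| ≤ L * dist x y)
    (hFmem : ∀ x, F x ∈ Set.Icc Fl Fu) (hFl : 0 < Fl) (hFlu : Fl ≤ Fu)
    (f g : Measure (Euc d))
    (hf : IsProbabilityMeasure f) (hg : IsProbabilityMeasure g) :
    W1trunc (reweight F f) (reweight F g) ≤
      (1 / Fl) * (1 + Fu / Fl) * (L + 2 * Fu) * W1trunc f g := by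
  have hFu : 0 < Fu := lt_of_lt_of_le hFl hFlu
  have hC : 0 < 1 / Fl * (1 + Fu / Fl) * (L + 2 * Fu) := by positivity
  have hmain : W1trunc (reweight F f) (reweight F g) / (1 / Fl * (1 + Fu / Fl) * (L + 2 * Fu))
      ≤ W1trunc f g := by
    rw [W1trunc]
    apply le_csInf
    · exact ⟨_, f.prod g, inferInstance, by simp, by simp, rfl⟩
    · rintro s ⟨π, hπP, h1, h2, rfl⟩
      rw [div_le_iff₀ hC, mul_comm]
      exact selection_key d F L Fl Fu hL hFlip hFmem hFl hFlu f g hf hg π hπP h1 h2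
  calc W1trunc (reweight F f) (reweight F g)
      = W1trunc (reweight F f) (reweight F g)
          / (1 / Fl * (1 + Fu / Fl) * (L + 2 * Fu)) * (1 / Fl * (1 + Fu / Fl) * (L + 2 * Fu)) := by
        field_simp
    _ ≤ W1trunc f g * (1 / Fl * (1 + Fu / Fl) * (L + 2 * Fu)) :=
        mul_le_mul_of_nonneg_right hmain hC.le
    _ = 1 / Fl * (1 + Fu / Fl) * (L + 2 * Fu) * W1trunc f g := mul_comm _ _
end
end

section
/- Let F : ℝ^d → [F̲, F̄] be globally Lipschitz, bounded and strictly positive (0 < F̲ ≤ F̄), and let C_F := (1/F̲)(1 + F̄/F̲)(Lip(F) + 2F̄). Then for any probability measures f, g on ℝ^d, ‖Q⁺(f,f) − Q⁺(g,g)‖_BL ≤ 2 ‖F f/⟨F,f⟩ − F g/⟨F,g⟩‖_BL ≤ 2 C_F ‖f − g‖_BL. -/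
open MeasureTheory ProbabilityTheory Set
open scoped ENNReal NNReal

noncomputable section

section blAux
variable {d : ℕ}

lemma integrable_of_bdd {α : Type*} [MeasurableSpace α] {μ : Measure α} [IsFiniteMeasure μ]
    {h : α → ℝ} (hm : AEStronglyMeasurable h μ) {C : ℝ} (hb : ∀ x, |h x| ≤ C) :
    Integrable h μ :=
  Integrable.mono' (integrable_const C) hm (ae_of_all _ fun x => by
    simpa [Real.norm_eq_abs] using hb x)

lemma abs_integral_le {α : Type*} [MeasurableSpace α] {μ : Measure α} [IsProbabilityMeasure μ]
    {h : α → ℝ} (hm : AEStronglyMeasurable h μ) {C : ℝ} (hb : ∀ x, |h x| ≤ C) :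
    |∫ x, h x ∂μ| ≤ C := by
  rw [← Real.norm_eq_abs]
  calc ‖∫ x, h x ∂μ‖ ≤ ∫ _x, C ∂μ := by
        refine norm_integral_le_of_norm_le (integrable_const C) (ae_of_all _ fun x => ?_)
        simpa [Real.norm_eq_abs] using hb x
    _ = C := by simp

lemma blset_bddAbove (f g : Measure (Euc d)) [IsProbabilityMeasure f] [IsProbabilityMeasure g] :
    BddAbove {r | ∃ φ : Euc d → ℝ, LipschitzWith 1 φ ∧ (∀ x, |φ x| ≤ 1/2) ∧
      r = (∫ x, φ x ∂f) - ∫ x, φ x ∂g} := by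
  refine ⟨1, ?_⟩
  rintro r ⟨φ, hlip, hbd, rfl⟩
  have h1 := abs_integral_le (μ := f) hlip.continuous.aestronglyMeasurable hbd
  have h2 := abs_integral_le (μ := g) hlip.continuous.aestronglyMeasurable hbd
  rw [abs_le] at h1 h2
  linarith [h1.1, h1.2, h2.1, h2.2]

lemma zero_mem_blset (f g : Measure (Euc d)) :
    (0:ℝ) ∈ {r | ∃ φ : Euc d → ℝ, LipschitzWith 1 φ ∧ (∀ x, |φ x| ≤ 1/2) ∧
      r = (∫ x, φ x ∂f) - ∫ x, φ x ∂g} :=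
  ⟨fun _ => 0, (LipschitzWith.const' 0).weaken (zero_le_one), fun _ => by norm_num, by simp⟩

lemma blDist_nonneg (f g : Measure (Euc d)) [IsProbabilityMeasure f] [IsProbabilityMeasure g] :
    0 ≤ blDist f g :=
  le_csSup (blset_bddAbove f g) (zero_mem_blset f g)

lemma le_blDist {f g : Measure (Euc d)} [IsProbabilityMeasure f] [IsProbabilityMeasure g]
    {φ : Euc d → ℝ} (hlip : LipschitzWith 1 φ) (hbd : ∀ x, |φ x| ≤ 1/2) :
    (∫ x, φ x ∂f) - ∫ x, φ x ∂g ≤ blDist f g :=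
  le_csSup (blset_bddAbove f g) ⟨φ, hlip, hbd, rfl⟩

lemma abs_le_blDist {f g : Measure (Euc d)} [IsProbabilityMeasure f] [IsProbabilityMeasure g]
    {φ : Euc d → ℝ} (hlip : LipschitzWith 1 φ) (hbd : ∀ x, |φ x| ≤ 1/2) :
    |(∫ x, φ x ∂f) - ∫ x, φ x ∂g| ≤ blDist f g := by
  rcases abs_cases ((∫ x, φ x ∂f) - ∫ x, φ x ∂g) with ⟨he, _⟩ | ⟨he, _⟩
  · rw [he]; exact le_blDist hlip hbd
  · rw [he]
    have h : (∫ x, (-φ) x ∂f) - ∫ x, (-φ) x ∂g ≤ blDist f g := by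
      refine le_blDist (φ := -φ) ?_ (fun x => by simpa using hbd x)
      exact LipschitzWith.of_dist_le_mul fun x y => by
        simpa [Real.dist_eq, abs_sub_comm (φ x), neg_sub_neg] using hlip.dist_le_mul x y
    have he2 : (∫ x, (-φ) x ∂f) - ∫ x, (-φ) x ∂g
        = -((∫ x, φ x ∂f) - ∫ x, φ x ∂g) := by
      simp only [Pi.neg_apply, integral_neg]; ring
    linarith [he2 ▸ h]

lemma blDist_le {f g : Measure (Euc d)} {C : ℝ} (hC : 0 ≤ C)
    (h : ∀ φ : Euc d → ℝ, LipschitzWith 1 φ → (∀ x, |φ x| ≤ 1/2) →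
      (∫ x, φ x ∂f) - ∫ x, φ x ∂g ≤ C) : blDist f g ≤ C :=
  Real.sSup_le (by rintro r ⟨φ, h1, h2, rfl⟩; exact h φ h1 h2) hC

lemma euc_dist_le {a b c e : Euc d} (h : ∀ i, dist (a i) (b i) ≤ dist (c i) (e i)) :
    dist a b ≤ dist c e := by
  rw [EuclideanSpace.dist_eq, EuclideanSpace.dist_eq]
  exact Real.sqrt_le_sqrt (Finset.sum_le_sum fun i _ => pow_le_pow_left₀ dist_nonneg (h i) 2)

lemma crossover_dist_fst {γ ξ x x' xs : Euc d} {σ : ℝ} (hγ : ∀ i, γ i ∈ Icc (0:ℝ) 1) :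
    dist (crossover γ ξ σ x xs) (crossover γ ξ σ x' xs) ≤ dist x x' := by
  refine euc_dist_le fun i => ?_
  have h1 : crossover γ ξ σ x xs i - crossover γ ξ σ x' xs i = (1 - γ i) * (x i - x' i) := by
    simp only [crossover, PiLp.toLp_apply]; ring
  rw [Real.dist_eq, Real.dist_eq, h1, abs_mul]
  have h2 : |1 - γ i| ≤ 1 := by
    rcases hγ i with ⟨h3, h4⟩; rw [abs_le]; constructor <;> linarith
  nlinarith [abs_nonneg (x i - x' i), abs_nonneg (1 - γ i)]

lemma crossover_dist_snd {γ ξ x xs xs' : Euc d} {σ : ℝ} (hγ : ∀ i, γ i ∈ Icc (0:ℝ) 1) :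
    dist (crossover γ ξ σ x xs) (crossover γ ξ σ x xs') ≤ dist xs xs' := by
  refine euc_dist_le fun i => ?_
  have h1 : crossover γ ξ σ x xs i - crossover γ ξ σ x xs' i = γ i * (xs i - xs' i) := by
    simp only [crossover, PiLp.toLp_apply]; ring
  rw [Real.dist_eq, Real.dist_eq, h1, abs_mul]
  have h2 : |γ i| ≤ 1 := by
    rcases hγ i with ⟨h3, h4⟩; rw [abs_le]; constructor <;> linarith
  nlinarith [abs_nonneg (xs i - xs' i), abs_nonneg (γ i)]

instance vol01_prob : IsProbabilityMeasure (volume.restrict (Set.Icc (0:ℝ) 1)) :=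
  ⟨by simp [Real.volume_Icc]⟩

instance stdGaussian_prob (d : ℕ) : IsProbabilityMeasure (stdGaussian d) :=
  Measure.isProbabilityMeasure_map (MeasurableEquiv.toLp 2 (Fin d → ℝ)).measurable.aemeasurable

instance unifCube_prob (d : ℕ) : IsProbabilityMeasure (unifCube d) :=
  Measure.isProbabilityMeasure_map (MeasurableEquiv.toLp 2 (Fin d → ℝ)).measurable.aemeasurable

lemma unifCube_ae_mem (d : ℕ) : ∀ᵐ γ ∂(unifCube d), ∀ i, γ i ∈ Icc (0:ℝ) 1 := by
  set S : Set (Euc d) := {γ : Euc d | ∀ i, γ i ∈ Icc (0:ℝ) 1} with hSdef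
  have hSc : IsClosed S := by
    have h : S = ⋂ i, (fun γ : Euc d => γ i) ⁻¹' Icc (0:ℝ) 1 := by
      ext γ; simp [hSdef]
    rw [h]
    exact isClosed_iInter fun i => isClosed_Icc.preimage (by fun_prop)
  have hS : MeasurableSet S := hSc.measurableSet
  have hpre : (MeasurableEquiv.toLp 2 (Fin d → ℝ)) ⁻¹' S
      = Set.pi univ (fun _ : Fin d => Icc (0:ℝ) 1) := by
    have hcoe : ∀ (y : Fin d → ℝ) i, ((MeasurableEquiv.toLp 2 (Fin d → ℝ)) y) i = y i :=
      fun _ _ => rfl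
    ext y
    simp only [hSdef, Set.mem_preimage, Set.mem_setOf_eq, Set.mem_univ_pi, hcoe]
  have hmeas : unifCube d S = 1 := by
    rw [unifCube, Measure.map_apply (MeasurableEquiv.toLp 2 (Fin d → ℝ)).measurable hS,
      hpre, Measure.pi_pi]
    simp [Measure.restrict_apply, Real.volume_Icc]
  have hc : unifCube d Sᶜ = 0 := by
    rw [measure_compl hS (by simp [hmeas]), hmeas]
    simp
  rw [ae_iff]
  have heq : {γ : Euc d | ¬ ∀ i, γ i ∈ Icc (0:ℝ) 1} = Sᶜ := by ext γ; simp [hSdef]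
  rw [heq]; exact hc

lemma reweight_prob {F : Euc d → ℝ} {f : Measure (Euc d)}
    (hFint : Integrable F f) (hcf : 0 < ∫ y, F y ∂f) (hFpos : ∀ x, 0 ≤ F x) :
    IsProbabilityMeasure (reweight F f) := by
  set cf := ∫ y, F y ∂f with hcfdef
  constructor
  rw [reweight, withDensity_apply _ MeasurableSet.univ, setLIntegral_univ,
    ← ofReal_integral_eq_lintegral_ofReal (hFint.div_const cf)
      (ae_of_all _ fun x => div_nonneg (hFpos x) hcf.le)]
  rw [integral_div, ← hcfdef, div_self hcf.ne', ENNReal.ofReal_one]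

lemma reweight_integral {F : Euc d → ℝ} {f : Measure (Euc d)}
    (hFc : Continuous F) (hcf : 0 < ∫ y, F y ∂f) (hFpos : ∀ x, 0 ≤ F x) (φ : Euc d → ℝ) :
    ∫ x, φ x ∂(reweight F f) = ∫ x, (F x / ∫ y, F y ∂f) * φ x ∂f := by
  set cf := ∫ y, F y ∂f with hcfdef
  have hmeas : Measurable fun x => (F x / cf).toNNReal :=
    (continuous_real_toNNReal.comp (hFc.div_const cf)).measurable
  have hd : (fun x => ENNReal.ofReal (F x / cf)) = fun x => ((F x / cf).toNNReal : ℝ≥0∞) := rfl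
  rw [reweight, ← hcfdef, hd, integral_withDensity_eq_integral_smul hmeas]
  refine integral_congr_ae (ae_of_all _ fun x => ?_)
  simp only [NNReal.smul_def, smul_eq_mul, Real.coe_toNNReal _ (div_nonneg (hFpos x) hcf.le)]

end blAux

set_option maxHeartbeats 1000000 in
/-- **Lipschitz stability of the gain operator** in the BL norm:
`‖Q⁺(f,f) - Q⁺(g,g)‖_BL ≤ 2 ‖Ff/⟨F,f⟩ - Fg/⟨F,g⟩‖_BL ≤ 2 C_F ‖f-g‖_BL` with
`C_F = (1/F̲)(1 + F̄/F̲)(Lip(F) + 2F̄)`. -/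
theorem gain_bl_stability (d : ℕ) (F : Euc d → ℝ) (L Fl Fu σ : ℝ)
    (hL : 0 ≤ L) (hFlip : ∀ x y, |F x - F y| ≤ L * dist x y)
    (hFmem : ∀ x, F x ∈ Set.Icc Fl Fu) (hFl : 0 < Fl) (hFlu : Fl ≤ Fu) (hσ : 0 < σ)
    (f g : Measure (Euc d))
    (hf : IsProbabilityMeasure f) (hg : IsProbabilityMeasure g) :
    blDist (Qplus F σ f) (Qplus F σ g) ≤ 2 * blDist (reweight F f) (reweight F g) ∧
    2 * blDist (reweight F f) (reweight F g) ≤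
      2 * ((1 / Fl) * (1 + Fu / Fl) * (L + 2 * Fu)) * blDist f g := by
  have hFu : 0 < Fu := lt_of_lt_of_le hFl hFlu
  have hFc : Continuous F := by
    have h : LipschitzWith L.toNNReal F :=
      LipschitzWith.of_dist_le_mul fun x y => by
        rw [Real.dist_eq, Real.coe_toNNReal L hL]; exact hFlip x y
    exact h.continuous
  have hFpos : ∀ x, 0 ≤ F x := fun x => le_trans hFl.le (hFmem x).1
  have hFbd : ∀ x, |F x| ≤ Fu := fun x => abs_le.2 ⟨by linarith [(hFmem x).1], (hFmem x).2⟩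
  have hFintf : Integrable F f := integrable_of_bdd hFc.aestronglyMeasurable hFbd
  have hFintg : Integrable F g := integrable_of_bdd hFc.aestronglyMeasurable hFbd
  have hcfl : Fl ≤ ∫ y, F y ∂f := by
    have h := integral_mono (integrable_const Fl) hFintf fun x => (hFmem x).1
    simpa using h
  have hcgl : Fl ≤ ∫ y, F y ∂g := by
    have h := integral_mono (integrable_const Fl) hFintg fun x => (hFmem x).1
    simpa using h
  have hcfu : (∫ y, F y ∂f) ≤ Fu := by
    have h := integral_mono hFintf (integrable_const Fu) fun x => (hFmem x).2
    simpa using h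
  have hcgu : (∫ y, F y ∂g) ≤ Fu := by
    have h := integral_mono hFintg (integrable_const Fu) fun x => (hFmem x).2
    simpa using h
  have hcf0 : 0 < ∫ y, F y ∂f := lt_of_lt_of_le hFl hcfl
  have hcg0 : 0 < ∫ y, F y ∂g := lt_of_lt_of_le hFl hcgl
  haveI hμfP : IsProbabilityMeasure (reweight F f) := reweight_prob hFintf hcf0 hFpos
  haveI hμgP : IsProbabilityMeasure (reweight F g) := reweight_prob hFintg hcg0 hFpos
  constructor
  · -- Part 1
    set μf := reweight F f with hμf
    set μg := reweight F g with hμg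
    haveI hOMS : OpensMeasurableSpace ((Euc d × Euc d) × Euc d × Euc d) :=
      Prod.opensMeasurableSpace
    have hbl0 : 0 ≤ blDist μf μg := blDist_nonneg μf μg
    refine blDist_le (by linarith) ?_
    intro φ hlip hbd
    have hφc : Continuous φ := hlip.continuous
    set ν := (unifCube d).prod (stdGaussian d) with hν
    have hTc : Continuous (fun p : (Euc d × Euc d) × (Euc d × Euc d) =>
        crossover p.2.1 p.2.2 σ p.1.1 p.1.2) := by
      unfold crossover; apply (PiLp.continuous_toLp 2 _).comp; apply continuous_pi; intro i; fun_prop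
    have hcrosscq : ∀ q : Euc d × Euc d,
        Continuous (fun p : Euc d × Euc d => φ (crossover p.1 p.2 σ q.1 q.2)) := by
      intro q
      have h : Continuous (fun p : Euc d × Euc d => crossover p.1 p.2 σ q.1 q.2) := by
        unfold crossover; apply (PiLp.continuous_toLp 2 _).comp; apply continuous_pi; intro i; fun_prop
      exact hφc.comp h
    set Ψ : Euc d × Euc d → ℝ :=
      fun q => ∫ p : Euc d × Euc d, φ (crossover p.1 p.2 σ q.1 q.2) ∂ν with hΨ
    have hΨbd : ∀ q, |Ψ q| ≤ 1/2 := fun q =>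
      abs_integral_le (hcrosscq q).aestronglyMeasurable (fun p => hbd _)
    have hcube : ∀ᵐ p ∂ν, ∀ i, p.1 i ∈ Icc (0:ℝ) 1 := by
      have h0 := unifCube_ae_mem d
      rw [ae_iff] at h0 ⊢
      have hsub : {p : Euc d × Euc d | ¬ ∀ i, p.1 i ∈ Icc (0:ℝ) 1} ⊆
          {γ : Euc d | ¬ ∀ i, γ i ∈ Icc (0:ℝ) 1} ×ˢ univ := fun p hp => ⟨hp, mem_univ _⟩
      refine measure_mono_null hsub ?_
      rw [hν, Measure.prod_prod, h0, zero_mul]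
    have hintq : ∀ q : Euc d × Euc d,
        Integrable (fun p : Euc d × Euc d => φ (crossover p.1 p.2 σ q.1 q.2)) ν :=
      fun q => integrable_of_bdd (hcrosscq q).aestronglyMeasurable (fun p => hbd _)
    have key1 : ∀ x x' xs : Euc d, |Ψ (x, xs) - Ψ (x', xs)| ≤ dist x x' := by
      intro x x' xs
      show |(∫ p : Euc d × Euc d, φ (crossover p.1 p.2 σ x xs) ∂ν) -
        ∫ p : Euc d × Euc d, φ (crossover p.1 p.2 σ x' xs) ∂ν| ≤ dist x x'
      rw [← integral_sub (hintq (x, xs)) (hintq (x', xs)), ← Real.norm_eq_abs]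
      calc ‖∫ p : Euc d × Euc d,
            (φ (crossover p.1 p.2 σ x xs) - φ (crossover p.1 p.2 σ x' xs)) ∂ν‖
          ≤ ∫ _p : Euc d × Euc d, dist x x' ∂ν := by
            refine norm_integral_le_of_norm_le (integrable_const _) ?_
            filter_upwards [hcube] with p hp
            rw [Real.norm_eq_abs, ← Real.dist_eq]
            have h1 : dist (φ (crossover p.1 p.2 σ x xs)) (φ (crossover p.1 p.2 σ x' xs))
                ≤ dist (crossover p.1 p.2 σ x xs) (crossover p.1 p.2 σ x' xs) := by
              simpa using hlip.dist_le_mul (crossover p.1 p.2 σ x xs) (crossover p.1 p.2 σ x' xs)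
            exact h1.trans (crossover_dist_fst hp)
        _ = dist x x' := by simp
    have key2 : ∀ x xs xs' : Euc d, |Ψ (x, xs) - Ψ (x, xs')| ≤ dist xs xs' := by
      intro x xs xs'
      show |(∫ p : Euc d × Euc d, φ (crossover p.1 p.2 σ x xs) ∂ν) -
        ∫ p : Euc d × Euc d, φ (crossover p.1 p.2 σ x xs') ∂ν| ≤ dist xs xs'
      rw [← integral_sub (hintq (x, xs)) (hintq (x, xs')), ← Real.norm_eq_abs]
      calc ‖∫ p : Euc d × Euc d,
            (φ (crossover p.1 p.2 σ x xs) - φ (crossover p.1 p.2 σ x xs')) ∂ν‖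
          ≤ ∫ _p : Euc d × Euc d, dist xs xs' ∂ν := by
            refine norm_integral_le_of_norm_le (integrable_const _) ?_
            filter_upwards [hcube] with p hp
            rw [Real.norm_eq_abs, ← Real.dist_eq]
            have h1 : dist (φ (crossover p.1 p.2 σ x xs)) (φ (crossover p.1 p.2 σ x xs'))
                ≤ dist (crossover p.1 p.2 σ x xs) (crossover p.1 p.2 σ x xs') := by
              simpa using hlip.dist_le_mul (crossover p.1 p.2 σ x xs) (crossover p.1 p.2 σ x xs')
            exact h1.trans (crossover_dist_snd hp)
        _ = dist xs xs' := by simp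
    have hΨcont : Continuous Ψ := by
      have h : LipschitzWith 2 Ψ := by
        apply LipschitzWith.of_dist_le_mul
        rintro ⟨x, xs⟩ ⟨x', xs'⟩
        have h1 := key1 x x' xs
        have h2 := key2 x' xs xs'
        have habs : |Ψ (x, xs) - Ψ (x', xs')| ≤ |Ψ (x, xs) - Ψ (x', xs)| +
            |Ψ (x', xs) - Ψ (x', xs')| := abs_sub_le _ _ _
        have hd1 : dist x x' ≤ dist ((x, xs) : Euc d × Euc d) (x', xs') := by
          rw [Prod.dist_eq]; exact le_max_left _ _
        have hd2 : dist xs xs' ≤ dist ((x, xs) : Euc d × Euc d) (x', xs') := by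
          rw [Prod.dist_eq]; exact le_max_right _ _
        rw [Real.dist_eq]
        push_cast
        linarith
      exact h.continuous
    have hΨintff : Integrable Ψ (μf.prod μf) :=
      integrable_of_bdd hΨcont.aestronglyMeasurable hΨbd
    have hΨintgf : Integrable Ψ (μg.prod μf) :=
      integrable_of_bdd hΨcont.aestronglyMeasurable hΨbd
    have hΨintgg : Integrable Ψ (μg.prod μg) :=
      integrable_of_bdd hΨcont.aestronglyMeasurable hΨbd
    have hintTf : Integrable (fun z : (Euc d × Euc d) × (Euc d × Euc d) =>
        φ (crossover z.2.1 z.2.2 σ z.1.1 z.1.2)) ((μf.prod μf).prod ν) :=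
      integrable_of_bdd (hφc.comp hTc).aestronglyMeasurable (C := 1/2) (fun p => hbd _)
    have hintTg : Integrable (fun z : (Euc d × Euc d) × (Euc d × Euc d) =>
        φ (crossover z.2.1 z.2.2 σ z.1.1 z.1.2)) ((μg.prod μg).prod ν) :=
      integrable_of_bdd (hφc.comp hTc).aestronglyMeasurable (C := 1/2) (fun p => hbd _)
    have hQf : ∫ x, φ x ∂(Qplus F σ f) = ∫ q, Ψ q ∂(μf.prod μf) := by
      rw [Qplus, ← hμf, ← hν]
      exact (integral_map hTc.measurable.aemeasurable hφc.aestronglyMeasurable).trans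
        (integral_prod _ hintTf)
    have hQg : ∫ x, φ x ∂(Qplus F σ g) = ∫ q, Ψ q ∂(μg.prod μg) := by
      rw [Qplus, ← hμg, ← hν]
      exact (integral_map hTc.measurable.aemeasurable hφc.aestronglyMeasurable).trans
        (integral_prod _ hintTg)
    set h1 : Euc d → ℝ := fun x => ∫ xs, Ψ (x, xs) ∂μf with hh1
    set h2 : Euc d → ℝ := fun xs => ∫ x, Ψ (x, xs) ∂μg with hh2
    have hΨsl1 : ∀ x : Euc d, Continuous (fun xs => Ψ (x, xs)) := fun x =>
      hΨcont.comp (continuous_const.prodMk continuous_id)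
    have hΨsl2 : ∀ xs : Euc d, Continuous (fun x => Ψ (x, xs)) := fun xs =>
      hΨcont.comp (continuous_id.prodMk continuous_const)
    have hint1 : ∀ (x : Euc d) (μ : Measure (Euc d)) (_ : IsProbabilityMeasure μ),
        Integrable (fun xs => Ψ (x, xs)) μ := fun x μ hμ =>
      integrable_of_bdd (hΨsl1 x).aestronglyMeasurable (fun xs => hΨbd _)
    have hint2 : ∀ (xs : Euc d) (μ : Measure (Euc d)) (_ : IsProbabilityMeasure μ),
        Integrable (fun x => Ψ (x, xs)) μ := fun xs μ hμ =>
      integrable_of_bdd (hΨsl2 xs).aestronglyMeasurable (fun x => hΨbd _)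
    have hh1lip : LipschitzWith 1 h1 := by
      apply LipschitzWith.of_dist_le_mul
      intro x x'
      rw [Real.dist_eq, NNReal.coe_one, one_mul]
      show |(∫ xs, Ψ (x, xs) ∂μf) - ∫ xs, Ψ (x', xs) ∂μf| ≤ dist x x'
      rw [← integral_sub (hint1 x μf hμfP) (hint1 x' μf hμfP), ← Real.norm_eq_abs]
      calc ‖∫ xs, (Ψ (x, xs) - Ψ (x', xs)) ∂μf‖ ≤ ∫ _xs, dist x x' ∂μf :=
            norm_integral_le_of_norm_le (integrable_const _) (ae_of_all _ fun xs => by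
              rw [Real.norm_eq_abs]; exact key1 x x' xs)
        _ = dist x x' := by simp
    have hh1bd : ∀ x, |h1 x| ≤ 1/2 := fun x =>
      abs_integral_le (hΨsl1 x).aestronglyMeasurable (fun xs => hΨbd _)
    have hh2lip : LipschitzWith 1 h2 := by
      apply LipschitzWith.of_dist_le_mul
      intro xs xs'
      rw [Real.dist_eq, NNReal.coe_one, one_mul]
      show |(∫ x, Ψ (x, xs) ∂μg) - ∫ x, Ψ (x, xs') ∂μg| ≤ dist xs xs'
      rw [← integral_sub (hint2 xs μg hμgP) (hint2 xs' μg hμgP), ← Real.norm_eq_abs]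
      calc ‖∫ x, (Ψ (x, xs) - Ψ (x, xs')) ∂μg‖ ≤ ∫ _x, dist xs xs' ∂μg :=
            norm_integral_le_of_norm_le (integrable_const _) (ae_of_all _ fun x => by
              rw [Real.norm_eq_abs]; exact key2 x xs xs')
        _ = dist xs xs' := by simp
    have hh2bd : ∀ xs, |h2 xs| ≤ 1/2 := fun xs =>
      abs_integral_le (hΨsl2 xs).aestronglyMeasurable (fun x => hΨbd _)
    have hff : ∫ q, Ψ q ∂(μf.prod μf) = ∫ x, h1 x ∂μf := by
      rw [integral_prod _ hΨintff]
    have hgf1 : ∫ q, Ψ q ∂(μg.prod μf) = ∫ x, h1 x ∂μg := by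
      rw [integral_prod _ hΨintgf]
    have hgf2 : ∫ q, Ψ q ∂(μg.prod μf) = ∫ xs, h2 xs ∂μf := by
      rw [integral_prod_symm _ hΨintgf]
    have hgg : ∫ q, Ψ q ∂(μg.prod μg) = ∫ xs, h2 xs ∂μg := by
      rw [integral_prod_symm _ hΨintgg]
    have d1 : (∫ x, h1 x ∂μf) - ∫ x, h1 x ∂μg ≤ blDist μf μg := le_blDist hh1lip hh1bd
    have d2 : (∫ xs, h2 xs ∂μf) - ∫ xs, h2 xs ∂μg ≤ blDist μf μg := le_blDist hh2lip hh2bd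
    rw [hQf, hQg, hff, hgg]
    linarith [hgf1, hgf2]
  · -- Part 2
    have hb0 : 0 ≤ blDist f g := blDist_nonneg f g
    have hCF0 : 0 ≤ (1 / Fl) * (1 + Fu / Fl) * (L + 2 * Fu) := by
      have hA : 0 < 1 / Fl := one_div_pos.mpr hFl
      have hB : 0 ≤ Fu / Fl := div_nonneg hFu.le hFl.le
      exact mul_nonneg (mul_nonneg hA.le (by linarith)) (by linarith)
    have hmain : blDist (reweight F f) (reweight F g) ≤
        (1 / Fl) * (1 + Fu / Fl) * (L + 2 * Fu) * blDist f g := by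
      refine blDist_le (mul_nonneg hCF0 hb0) ?_
      intro φ hlip hbd
      rw [reweight_integral hFc hcf0 hFpos φ, reweight_integral hFc hcg0 hFpos φ]
      have hIfe : ∫ x, (F x / ∫ y, F y ∂f) * φ x ∂f
          = (∫ x, F x * φ x ∂f) / ∫ y, F y ∂f := by
        rw [← integral_div]
        exact integral_congr_ae (ae_of_all _ fun x => by ring)
      have hIge : ∫ x, (F x / ∫ y, F y ∂g) * φ x ∂g
          = (∫ x, F x * φ x ∂g) / ∫ y, F y ∂g := by
        rw [← integral_div]
        exact integral_congr_ae (ae_of_all _ fun x => by ring)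
      rw [hIfe, hIge]
      set If := ∫ x, F x * φ x ∂f with hIf
      set Ig := ∫ x, F x * φ x ∂g with hIg
      set cf := ∫ y, F y ∂f with hcf
      set cg := ∫ y, F y ∂g with hcg
      have hφd : ∀ x y : Euc d, |φ x - φ y| ≤ dist x y := fun x y => by
        have h := hlip.dist_le_mul x y
        rwa [Real.dist_eq, NNReal.coe_one, one_mul] at h
      have hFφbd : ∀ x, |F x * φ x| ≤ Fu / 2 := fun x => by
        rw [abs_mul]
        calc |F x| * |φ x| ≤ Fu * (1/2) :=
              mul_le_mul (hFbd x) (hbd x) (abs_nonneg _) hFu.le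
          _ = Fu / 2 := by ring
      have hFφintf : Integrable (fun x => F x * φ x) f :=
        integrable_of_bdd (hFc.mul hlip.continuous).aestronglyMeasurable hFφbd
      have hFφintg : Integrable (fun x => F x * φ x) g :=
        integrable_of_bdd (hFc.mul hlip.continuous).aestronglyMeasurable hFφbd
      set K := L / 2 + Fu with hK
      have hK0 : 0 < K := by rw [hK]; linarith
      have habs1 : |If - Ig| ≤ K * blDist f g := by
        have hψlip : LipschitzWith 1 (fun x => (F x * φ x) / K) := by
          apply LipschitzWith.of_dist_le_mul
          intro x y
          rw [Real.dist_eq, NNReal.coe_one, one_mul, div_sub_div_same, abs_div,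
            abs_of_pos hK0, div_le_iff₀ hK0]
          have e : F x * φ x - F y * φ y = φ x * (F x - F y) + F y * (φ x - φ y) := by ring
          rw [e]
          have t1 : |φ x * (F x - F y)| ≤ (1/2) * (L * dist x y) := by
            rw [abs_mul]
            exact mul_le_mul (hbd x) (hFlip x y) (abs_nonneg _) (by norm_num)
          have t2 : |F y * (φ x - φ y)| ≤ Fu * dist x y := by
            rw [abs_mul]
            exact mul_le_mul (hFbd y) (hφd x y) (abs_nonneg _) hFu.le
          calc |φ x * (F x - F y) + F y * (φ x - φ y)|
              ≤ |φ x * (F x - F y)| + |F y * (φ x - φ y)| := abs_add_le _ _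
            _ ≤ (1/2) * (L * dist x y) + Fu * dist x y := add_le_add t1 t2
            _ = dist x y * K := by rw [hK]; ring
        have hψbd : ∀ x, |(F x * φ x) / K| ≤ 1/2 := fun x => by
          rw [abs_div, abs_of_pos hK0, div_le_iff₀ hK0]
          calc |F x * φ x| ≤ Fu / 2 := hFφbd x
            _ ≤ 1/2 * K := by rw [hK]; linarith
        have h := abs_le_blDist (f := f) (g := g) hψlip hψbd
        rw [integral_div, integral_div, ← hIf, ← hIg, div_sub_div_same, abs_div,
          abs_of_pos hK0, div_le_iff₀ hK0] at h
        linarith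
      set K2 := L + Fu with hK2
      have hK20 : 0 < K2 := by rw [hK2]; linarith
      have habs2 : |cf - cg| ≤ K2 * blDist f g := by
        set c0 := (Fl + Fu) / 2 with hc0
        have hψlip : LipschitzWith 1 (fun x => (F x - c0) / K2) := by
          apply LipschitzWith.of_dist_le_mul
          intro x y
          rw [Real.dist_eq, NNReal.coe_one, one_mul, div_sub_div_same, abs_div,
            abs_of_pos hK20, div_le_iff₀ hK20]
          have e : F x - c0 - (F y - c0) = F x - F y := by ring
          rw [e]
          calc |F x - F y| ≤ L * dist x y := hFlip x y
            _ ≤ dist x y * K2 := by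
                rw [hK2]
                nlinarith [dist_nonneg (x := x) (y := y), mul_nonneg (dist_nonneg (x := x) (y := y)) hFu.le]
        have hψbd : ∀ x, |(F x - c0) / K2| ≤ 1/2 := fun x => by
          rw [abs_div, abs_of_pos hK20, div_le_iff₀ hK20]
          have h1 := (hFmem x).1
          have h2 := (hFmem x).2
          rw [abs_le]
          constructor <;> rw [hc0, hK2] <;> nlinarith
        have h := abs_le_blDist (f := f) (g := g) hψlip hψbd
        have hef : ∫ x, (F x - c0) / K2 ∂f = (cf - c0) / K2 := by
          rw [integral_div, integral_sub hFintf (integrable_const c0), integral_const]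
          simp [hcf]
        have heg : ∫ x, (F x - c0) / K2 ∂g = (cg - c0) / K2 := by
          rw [integral_div, integral_sub hFintg (integrable_const c0), integral_const]
          simp [hcg]
        rw [hef, heg, div_sub_div_same, abs_div, abs_of_pos hK20, div_le_iff₀ hK20] at h
        have e : cf - c0 - (cg - c0) = cf - cg := by ring
        rw [e] at h
        linarith
      have habs3 : |Ig| ≤ Fu / 2 :=
        abs_integral_le (hFc.mul hlip.continuous).aestronglyMeasurable hFφbd
      clear_value If Ig cf cg K K2
      have hcfg : 0 < cf * cg := mul_pos hcf0 hcg0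
      have t1 : (If - Ig) * cg ≤ K * blDist f g * Fu := by
        calc (If - Ig) * cg ≤ |If - Ig| * cg :=
              mul_le_mul_of_nonneg_right (le_abs_self _) (by linarith)
          _ ≤ K * blDist f g * Fu :=
              mul_le_mul habs1 hcgu (by linarith) (mul_nonneg hK0.le hb0)
      have t2 : Ig * (cg - cf) ≤ (Fu / 2) * (K2 * blDist f g) := by
        calc Ig * (cg - cf) ≤ |Ig * (cg - cf)| := le_abs_self _
          _ = |Ig| * |cg - cf| := abs_mul _ _
          _ ≤ (Fu / 2) * (K2 * blDist f g) := by
              refine mul_le_mul habs3 ?_ (abs_nonneg _) (by linarith)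
              rw [abs_sub_comm]; exact habs2
      have hccl : Fl * Fl ≤ cf * cg := mul_le_mul hcfl hcgl hFl.le (by linarith)
      have hnum : 0 ≤ (Fl + Fu) * (L + 2 * Fu) * blDist f g :=
        mul_nonneg (mul_nonneg (by linarith) (by linarith)) hb0
      have h7 : K * blDist f g * Fu + (Fu / 2) * (K2 * blDist f g)
          ≤ (Fl + Fu) * (L + 2 * Fu) * blDist f g := by
        rw [hK, hK2]
        nlinarith [mul_nonneg hb0 (mul_nonneg hFl.le hL),
          mul_nonneg hb0 (mul_nonneg hFl.le hFu.le),
          mul_nonneg hb0 (mul_nonneg hFu.le hFu.le)]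
      calc If / cf - Ig / cg = (If * cg - cf * Ig) / (cf * cg) :=
            div_sub_div _ _ hcf0.ne' hcg0.ne'
        _ ≤ ((Fl + Fu) * (L + 2 * Fu) * blDist f g) / (cf * cg) := by
            refine (div_le_div_iff_of_pos_right hcfg).2 ?_
            have e : If * cg - cf * Ig = (If - Ig) * cg + Ig * (cg - cf) := by ring
            rw [e]; linarith
        _ ≤ ((Fl + Fu) * (L + 2 * Fu) * blDist f g) / (Fl * Fl) :=
            div_le_div₀ hnum le_rfl (mul_pos hFl hFl) hccl
        _ = 1 / Fl * (1 + Fu / Fl) * (L + 2 * Fu) * blDist f g := by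
            field_simp
    calc 2 * blDist (reweight F f) (reweight F g)
        ≤ 2 * ((1 / Fl) * (1 + Fu / Fl) * (L + 2 * Fu) * blDist f g) := by linarith
      _ = 2 * ((1 / Fl) * (1 + Fu / Fl) * (L + 2 * Fu)) * blDist f g := by ring
end
end

section
/- Let F : ℝ^d → [F̲, F̄] be globally Lipschitz, bounded and strictly positive, σ > 0, τ ∈ (0,1]. For coupled random vectors X, X̄, parents X^{j₁}, X^{j₂} and X*(α¹), X*(α²) with (X*(α^k), X^{j_k}) optimal couplings (for the cost D^∧) between the reweighted law F f/⟨F,f⟩ and the reweighted empirical measure Σ_i w^i δ_{X^i}, and updates X' = (1−τ')X + τ'((1−γ)⊙X^{j₁} + γ⊙X^{j₂} + σξ), X̄' = (1−τ')X̄ + τ'((1−γ)⊙X*(α¹) + γ⊙X*(α²) + σξ) with the same τ' ~ Bern(τ), γ ~ Unif[0,1]^d, ξ ~ N(0,I_d) independent of the rest, one has E[D^∧(X', X̄')] ≤ (1−τ) E[D^∧(X, X̄)] + 2τ E[W₁^∧(F f/⟨F,f⟩, Σ_i w^i δ_{X^i})]. -/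
open MeasureTheory ProbabilityTheory Set
open scoped ENNReal NNReal

noncomputable section

lemma min_one_add {a b : ℝ} (ha : 0 ≤ a) (hb : 0 ≤ b) :
    min (a + b) 1 ≤ min a 1 + min b 1 := by
  rcases le_total 1 a with h | h
  · have : min a 1 = 1 := min_eq_right h
    have hb' : 0 ≤ min b 1 := le_min hb zero_le_one
    calc min (a + b) 1 ≤ 1 := min_le_right _ _
      _ ≤ min a 1 + min b 1 := by rw [this]; linarith
  rcases le_total 1 b with h' | h'
  · have : min b 1 = 1 := min_eq_right h'
    have ha' : 0 ≤ min a 1 := le_min ha zero_le_one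
    calc min (a + b) 1 ≤ 1 := min_le_right _ _
      _ ≤ min a 1 + min b 1 := by rw [this]; linarith
  · calc min (a + b) 1 ≤ a + b := min_le_left _ _
      _ = min a 1 + min b 1 := by rw [min_eq_left h, min_eq_left h']

lemma euc_norm_mono {d : ℕ} {u v : Euc d} (h : ∀ i, |u i| ≤ |v i|) : ‖u‖ ≤ ‖v‖ := by
  rw [EuclideanSpace.norm_eq, EuclideanSpace.norm_eq]
  apply Real.sqrt_le_sqrt
  apply Finset.sum_le_sum
  intro i _
  have := h i
  rw [Real.norm_eq_abs, Real.norm_eq_abs]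
  nlinarith [abs_nonneg (u i), abs_nonneg (v i)]

lemma crossover_dist_le {d : ℕ} {γ : Euc d} (hγ : ∀ i, γ i ∈ Set.Icc (0:ℝ) 1)
    (ξ : Euc d) (σ : ℝ) (a b a' b' : Euc d) :
    dist (crossover γ ξ σ a b) (crossover γ ξ σ a' b') ≤ dist a a' + dist b b' := by
  set v : Euc d := (WithLp.equiv 2 (∀ _ : Fin d, ℝ)).symm
    (fun i => (1 - γ i) * (a i - a' i)) with hv
  set w : Euc d := (WithLp.equiv 2 (∀ _ : Fin d, ℝ)).symm
    (fun i => γ i * (b i - b' i)) with hw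
  have hvi : ∀ i, v i = (1 - γ i) * (a i - a' i) := fun i => rfl
  have hwi : ∀ i, w i = γ i * (b i - b' i) := fun i => rfl
  have key : crossover γ ξ σ a b - crossover γ ξ σ a' b' = v + w := by
    ext i
    simp only [PiLp.sub_apply, PiLp.add_apply, hvi, hwi, crossover, PiLp.toLp_apply]
    ring
  rw [dist_eq_norm, key]
  have h1 : ‖v‖ ≤ dist a a' := by
    rw [dist_eq_norm]
    apply euc_norm_mono
    intro i
    have h0 := (hγ i).1; have h1 := (hγ i).2
    rw [hvi, PiLp.sub_apply, abs_mul]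
    calc |1 - γ i| * |a i - a' i| ≤ 1 * |a i - a' i| := by
          apply mul_le_mul_of_nonneg_right _ (abs_nonneg _)
          rw [abs_le]; constructor <;> linarith
      _ = |a i - a' i| := one_mul _
  have h2 : ‖w‖ ≤ dist b b' := by
    rw [dist_eq_norm]
    apply euc_norm_mono
    intro i
    have h0 := (hγ i).1; have h1' := (hγ i).2
    rw [hwi, PiLp.sub_apply, abs_mul]
    calc |γ i| * |b i - b' i| ≤ 1 * |b i - b' i| := by
          apply mul_le_mul_of_nonneg_right _ (abs_nonneg _)
          rw [abs_le]; constructor <;> linarith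
      _ = |b i - b' i| := one_mul _
  calc ‖v + w‖ ≤ ‖v‖ + ‖w‖ := norm_add_le _ _
    _ ≤ dist a a' + dist b b' := add_le_add h1 h2

lemma min_dist_one_bound {α : Type*} [PseudoMetricSpace α] (x y : α) :
    ‖min (dist x y) 1‖ ≤ 1 := by
  rw [Real.norm_eq_abs, abs_le]
  constructor
  · have : (0:ℝ) ≤ min (dist x y) 1 := le_min dist_nonneg zero_le_one
    linarith
  · exact min_le_right _ _

/-- **One-step coupling contraction.** With optimally coupled parents (for the truncated
cost `D^∧`) and common randomness `τ' ~ Bern(τ)`, `γ ~ Unif[0,1]^d`, `ξ ~ N(0,I_d)`,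
`E[D^∧(X',X̄')] ≤ (1-τ) E[D^∧(X,X̄)] + 2τ E[W₁^∧(Ff/⟨F,f⟩, ∑w^iδ_{X^i})]`. -/
theorem one_step_coupling_estimate (d N : ℕ) (F : Euc d → ℝ) (L Fl Fu σ τ : ℝ)
    (hL : 0 ≤ L) (hFlip : ∀ x y, |F x - F y| ≤ L * dist x y)
    (hFmem : ∀ x, F x ∈ Set.Icc Fl Fu) (hFl : 0 < Fl) (hFlu : Fl ≤ Fu)
    (hσ : 0 < σ) (hτ0 : 0 < τ) (hτ1 : τ ≤ 1)
    (f : Measure (Euc d)) (hf : IsProbabilityMeasure f)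
    (Ω : Type) (_mΩ : MeasurableSpace Ω) (P : Measure Ω)
    (hP : IsProbabilityMeasure P)
    (X Xb Xj1 Xj2 Xs1 Xs2 γv ξv X' Xb' : Ω → Euc d) (τr : Ω → ℝ)
    (x : Fin N → Ω → Euc d)
    (hXm : Measurable X) (hXbm : Measurable Xb)
    (hXj1m : Measurable Xj1) (hXj2m : Measurable Xj2)
    (hXs1m : Measurable Xs1) (hXs2m : Measurable Xs2)
    (hγm : Measurable γv) (hξm : Measurable ξv) (hτm : Measurable τr)
    (hxm : ∀ i, Measurable (x i))
    (hτlaw : P.map τr = bern τ)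
    (hγlaw : P.map γv = unifCube d) (hξlaw : P.map ξv = stdGaussian d)
    (hindτ : IndepFun τr
      (fun ω => (X ω, Xb ω, Xj1 ω, Xj2 ω, Xs1 ω, Xs2 ω, γv ω, ξv ω)) P)
    (hopt1 : (∫ ω, min (dist (Xs1 ω) (Xj1 ω)) 1 ∂P) =
      ∫ ω, W1trunc (reweight F f)
        (wEmpMeas (gaWeights F fun i => x i ω) (fun i => x i ω)) ∂P)
    (hopt2 : (∫ ω, min (dist (Xs2 ω) (Xj2 ω)) 1 ∂P) =
      ∫ ω, W1trunc (reweight F f)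
        (wEmpMeas (gaWeights F fun i => x i ω) (fun i => x i ω)) ∂P)
    (hX' : ∀ ω, X' ω = (1 - τr ω) • X ω +
      τr ω • crossover (γv ω) (ξv ω) σ (Xj1 ω) (Xj2 ω))
    (hXb' : ∀ ω, Xb' ω = (1 - τr ω) • Xb ω +
      τr ω • crossover (γv ω) (ξv ω) σ (Xs1 ω) (Xs2 ω)) :
    (∫ ω, min (dist (X' ω) (Xb' ω)) 1 ∂P) ≤
      (1 - τ) * (∫ ω, min (dist (X ω) (Xb ω)) 1 ∂P) +
      2 * τ * ∫ ω, W1trunc (reweight F f)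
        (wEmpMeas (gaWeights F fun i => x i ω) (fun i => x i ω)) ∂P := by
  classical
  -- indicator functions of τ' = 0 and τ' = 1
  set g0 : ℝ → ℝ := Set.indicator {(0:ℝ)} (fun _ => 1) with hg0def
  set g1 : ℝ → ℝ := Set.indicator {(1:ℝ)} (fun _ => 1) with hg1def
  have hg0m : Measurable g0 := measurable_const.indicator (measurableSet_singleton 0)
  have hg1m : Measurable g1 := measurable_const.indicator (measurableSet_singleton 1)
  -- the tuple of all randomness except τ'
  set T : Ω → Euc d × Euc d × Euc d × Euc d × Euc d × Euc d × Euc d × Euc d :=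
    fun ω => (X ω, Xb ω, Xj1 ω, Xj2 ω, Xs1 ω, Xs2 ω, γv ω, ξv ω) with hTdef
  have hTm : Measurable T := by
    apply Measurable.prodMk hXm
    apply Measurable.prodMk hXbm
    apply Measurable.prodMk hXj1m
    apply Measurable.prodMk hXj2m
    apply Measurable.prodMk hXs1m
    apply Measurable.prodMk hXs2m
    exact Measurable.prodMk hγm hξm
  -- test functions on the tuple
  set φA : Euc d × Euc d × Euc d × Euc d × Euc d × Euc d × Euc d × Euc d → ℝ :=
    fun p => min (dist p.1 p.2.1) 1 with hφAdef
  set φB1 : Euc d × Euc d × Euc d × Euc d × Euc d × Euc d × Euc d × Euc d → ℝ :=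
    fun p => min (dist p.2.2.2.2.1 p.2.2.1) 1 with hφB1def
  set φB2 : Euc d × Euc d × Euc d × Euc d × Euc d × Euc d × Euc d × Euc d → ℝ :=
    fun p => min (dist p.2.2.2.2.2.1 p.2.2.2.1) 1 with hφB2def
  have hφAm : Measurable φA := by
    apply Measurable.min _ measurable_const
    exact (measurable_fst.dist (measurable_snd.fst))
  have hφB1m : Measurable φB1 := by
    apply Measurable.min _ measurable_const
    exact (measurable_snd.snd.snd.snd.fst.dist (measurable_snd.snd.fst))
  have hφB2m : Measurable φB2 := by
    apply Measurable.min _ measurable_const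
    exact (measurable_snd.snd.snd.snd.snd.fst.dist (measurable_snd.snd.snd.fst))
  -- boundedness / integrability of all the factors
  have hbdd : ∀ (u : Ω → ℝ), Measurable u → (∀ ω, ‖u ω‖ ≤ 1) → Integrable u P := by
    intro u hu hb
    exact (integrable_const (1:ℝ)).mono' hu.aestronglyMeasurable
      (Filter.Eventually.of_forall hb)
  have hg0b : ∀ t, ‖g0 t‖ ≤ 1 := by
    intro t
    rw [hg0def, Real.norm_eq_abs]
    by_cases h : t ∈ ({(0:ℝ)} : Set ℝ) <;> simp [Set.indicator_apply, h]
  have hg1b : ∀ t, ‖g1 t‖ ≤ 1 := by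
    intro t
    rw [hg1def, Real.norm_eq_abs]
    by_cases h : t ∈ ({(1:ℝ)} : Set ℝ) <;> simp [Set.indicator_apply, h]
  have hIg0 : Integrable (g0 ∘ τr) P := hbdd _ (hg0m.comp hτm) fun ω => hg0b _
  have hIg1 : Integrable (g1 ∘ τr) P := hbdd _ (hg1m.comp hτm) fun ω => hg1b _
  have hIA : Integrable (φA ∘ T) P :=
    hbdd _ (hφAm.comp hTm) fun ω => min_dist_one_bound _ _
  have hIB1 : Integrable (φB1 ∘ T) P :=
    hbdd _ (hφB1m.comp hTm) fun ω => min_dist_one_bound _ _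
  have hIB2 : Integrable (φB2 ∘ T) P :=
    hbdd _ (hφB2m.comp hTm) fun ω => min_dist_one_bound _ _
  -- independence of τ'-indicators and the tuple-functions
  have hi0A : IndepFun (g0 ∘ τr) (φA ∘ T) P := hindτ.comp hg0m hφAm
  have hi1B1 : IndepFun (g1 ∘ τr) (φB1 ∘ T) P := hindτ.comp hg1m hφB1m
  have hi1B2 : IndepFun (g1 ∘ τr) (φB2 ∘ T) P := hindτ.comp hg1m hφB2m
  -- the laws of the indicators
  have hτ01 : ∀ s : Set ℝ, MeasurableSet s → P (τr ⁻¹' s) = bern τ s := by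
    intro s hs
    rw [← Measure.map_apply hτm hs, hτlaw]
  have hP0 : P (τr ⁻¹' {(0:ℝ)}) = ENNReal.ofReal (1 - τ) := by
    rw [hτ01 _ (measurableSet_singleton 0)]
    simp [bern, Measure.dirac_apply' _ (measurableSet_singleton (0:ℝ)),
      Set.indicator_apply]
  have hP1 : P (τr ⁻¹' {(1:ℝ)}) = ENNReal.ofReal τ := by
    rw [hτ01 _ (measurableSet_singleton 1)]
    simp [bern, Measure.dirac_apply' _ (measurableSet_singleton (1:ℝ)),
      Set.indicator_apply]
  have hint_g0 : (∫ ω, (g0 ∘ τr) ω ∂P) = 1 - τ := by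
    have heq : (fun ω => (g0 ∘ τr) ω) = Set.indicator (τr ⁻¹' {(0:ℝ)}) (fun _ => (1:ℝ)) := by
      funext ω
      by_cases h : τr ω = 0 <;>
        simp [hg0def, Set.indicator_apply, Function.comp, h]
    rw [heq, integral_indicator_const _ (hτm (measurableSet_singleton 0)), measureReal_def, hP0]
    rw [smul_eq_mul, mul_one, ENNReal.toReal_ofReal (by linarith)]
  have hint_g1 : (∫ ω, (g1 ∘ τr) ω ∂P) = τ := by
    have heq : (fun ω => (g1 ∘ τr) ω) = Set.indicator (τr ⁻¹' {(1:ℝ)}) (fun _ => (1:ℝ)) := by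
      funext ω
      by_cases h : τr ω = 1 <;>
        simp [hg1def, Set.indicator_apply, Function.comp, h]
    rw [heq, integral_indicator_const _ (hτm (measurableSet_singleton 1)), measureReal_def, hP1]
    rw [smul_eq_mul, mul_one, ENNReal.toReal_ofReal (by linarith)]
  -- a.e., τ' ∈ {0,1}
  have hτae : ∀ᵐ ω ∂P, τr ω = 0 ∨ τr ω = 1 := by
    rw [ae_iff]
    have hs : MeasurableSet ({0, 1} : Set ℝ) :=
      (measurableSet_singleton 0).union (measurableSet_singleton 1)
    have : {ω | ¬(τr ω = 0 ∨ τr ω = 1)} = τr ⁻¹' ({0, 1} : Set ℝ)ᶜ := by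
      ext ω; simp [Set.mem_insert_iff]
    rw [this, hτ01 _ hs.compl]
    simp [bern, Measure.dirac_apply' _ hs.compl, Set.indicator_apply]
  -- a.e., γ ∈ [0,1]^d
  have hγae : ∀ᵐ ω ∂P, ∀ i, γv ω i ∈ Set.Icc (0:ℝ) 1 := by
    rw [ae_iff]
    have hCm : MeasurableSet {y : Euc d | ∀ i, y i ∈ Set.Icc (0:ℝ) 1} := by
      have : {y : Euc d | ∀ i, y i ∈ Set.Icc (0:ℝ) 1} =
          ⋂ i, (fun y : Euc d => y i) ⁻¹' Set.Icc (0:ℝ) 1 := by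
        ext y; simp [Set.mem_iInter]
      rw [this]
      exact MeasurableSet.iInter fun i =>
        ((measurable_pi_apply i).comp (WithLp.measurable_ofLp 2 _)) measurableSet_Icc
    have hpre : {ω | ¬∀ i, γv ω i ∈ Set.Icc (0:ℝ) 1} =
        γv ⁻¹' {y : Euc d | ∀ i, y i ∈ Set.Icc (0:ℝ) 1}ᶜ := by
      ext ω; simp
    rw [hpre, ← Measure.map_apply hγm hCm.compl, hγlaw]
    -- unifCube of the complement of the cube is zero
    haveI : IsProbabilityMeasure (volume.restrict (Set.Icc (0:ℝ) 1)) :=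
      ⟨by simp [Real.volume_Icc]⟩
    haveI : IsProbabilityMeasure
        (Measure.pi fun _ : Fin d => volume.restrict (Set.Icc (0:ℝ) 1)) := by
      infer_instance
    rw [unifCube, Measure.map_apply (MeasurableEquiv.measurable _) hCm.compl]
    have hpre2 : (MeasurableEquiv.toLp 2 (Fin d → ℝ)) ⁻¹'
        {y : Euc d | ∀ i, y i ∈ Set.Icc (0:ℝ) 1}ᶜ =
        (Set.univ.pi fun _ : Fin d => Set.Icc (0:ℝ) 1)ᶜ := by
      rw [Set.preimage_compl]
      congr 1
      ext y
      constructor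
      · intro hy i _
        exact hy i
      · intro hy i
        exact hy i (Set.mem_univ i)
    rw [hpre2]
    have hcube : (Measure.pi fun _ : Fin d => volume.restrict (Set.Icc (0:ℝ) 1))
        (Set.univ.pi fun _ : Fin d => Set.Icc (0:ℝ) 1) = 1 := by
      rw [Measure.pi_pi]
      simp [Real.volume_Icc]
    rw [measure_compl (MeasurableSet.univ_pi fun _ => measurableSet_Icc)
      (by rw [hcube]; exact ENNReal.one_ne_top), hcube]
    simp
  -- the dominating function
  set h : Ω → ℝ := fun ω => (g0 ∘ τr) ω * (φA ∘ T) ω +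
    ((g1 ∘ τr) ω * (φB1 ∘ T) ω + (g1 ∘ τr) ω * (φB2 ∘ T) ω) with hhdef
  -- a.e. pointwise bound
  have hptwise : ∀ᵐ ω ∂P, min (dist (X' ω) (Xb' ω)) 1 ≤ h ω := by
    filter_upwards [hτae, hγae] with ω hτω hγω
    rcases hτω with h0 | h1
    · have hX'' : X' ω = X ω := by
        rw [hX' ω, h0]; simp
      have hXb'' : Xb' ω = Xb ω := by
        rw [hXb' ω, h0]; simp
      have hg0v : g0 (τr ω) = 1 := by rw [h0]; simp [hg0def, Set.indicator_apply]
      have hg1v : g1 (τr ω) = 0 := by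
        rw [h0]; norm_num [hg1def, Set.indicator_apply]
      simp only [hhdef, Function.comp, hφAdef, hTdef, hg0v, hg1v, hX'', hXb'']
      simp
    · have hX'' : X' ω = crossover (γv ω) (ξv ω) σ (Xj1 ω) (Xj2 ω) := by
        rw [hX' ω, h1]; simp
      have hXb'' : Xb' ω = crossover (γv ω) (ξv ω) σ (Xs1 ω) (Xs2 ω) := by
        rw [hXb' ω, h1]; simp
      have hg0v : g0 (τr ω) = 0 := by rw [h1]; simp [hg0def, Set.indicator_apply]
      have hg1v : g1 (τr ω) = 1 := by rw [h1]; simp [hg1def, Set.indicator_apply]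
      have hdist : dist (X' ω) (Xb' ω) ≤
          dist (Xj1 ω) (Xs1 ω) + dist (Xj2 ω) (Xs2 ω) := by
        rw [hX'', hXb'']
        exact crossover_dist_le hγω (ξv ω) σ _ _ _ _
      calc min (dist (X' ω) (Xb' ω)) 1 ≤
            min (dist (Xj1 ω) (Xs1 ω) + dist (Xj2 ω) (Xs2 ω)) 1 :=
          min_le_min hdist le_rfl
        _ ≤ min (dist (Xj1 ω) (Xs1 ω)) 1 + min (dist (Xj2 ω) (Xs2 ω)) 1 :=
          min_one_add dist_nonneg dist_nonneg
        _ = h ω := by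
          simp only [hhdef, Function.comp, hφB1def, hφB2def, hTdef, hg0v, hg1v]
          rw [dist_comm (Xj1 ω) (Xs1 ω), dist_comm (Xj2 ω) (Xs2 ω)]
          ring
  -- integrability of both sides
  have hof : ∀ {Y : Ω → Euc d}, Measurable Y → ∀ i, Measurable fun ω => Y ω i :=
    fun hY i => (measurable_pi_apply i).comp ((WithLp.measurable_ofLp 2 _).comp hY)
  have hX'm : Measurable X' := by
    have : X' = fun ω => (1 - τr ω) • X ω +
        τr ω • crossover (γv ω) (ξv ω) σ (Xj1 ω) (Xj2 ω) := funext hX'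
    rw [this]
    apply Measurable.add
    · exact (measurable_const.sub hτm).smul hXm
    · apply hτm.smul
      refine (WithLp.measurable_toLp 2 (Fin d → ℝ)).comp (f := fun ω i =>
        (1 - γv ω i) * Xj1 ω i + γv ω i * Xj2 ω i + σ * ξv ω i) ?_
      apply measurable_pi_lambda
      intro i
      exact ((measurable_const.sub (hof hγm i)).mul
        (hof hXj1m i)).add
        (((hof hγm i)).mul
          (hof hXj2m i)) |>.add
        (measurable_const.mul (hof hξm i))
  have hXb'm : Measurable Xb' := by
    have : Xb' = fun ω => (1 - τr ω) • Xb ω +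
        τr ω • crossover (γv ω) (ξv ω) σ (Xs1 ω) (Xs2 ω) := funext hXb'
    rw [this]
    apply Measurable.add
    · exact (measurable_const.sub hτm).smul hXbm
    · apply hτm.smul
      refine (WithLp.measurable_toLp 2 (Fin d → ℝ)).comp (f := fun ω i =>
        (1 - γv ω i) * Xs1 ω i + γv ω i * Xs2 ω i + σ * ξv ω i) ?_
      apply measurable_pi_lambda
      intro i
      exact ((measurable_const.sub (hof hγm i)).mul
        (hof hXs1m i)).add
        (((hof hγm i)).mul
          (hof hXs2m i)) |>.add
        (measurable_const.mul (hof hξm i))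
  have hILHS : Integrable (fun ω => min (dist (X' ω) (Xb' ω)) 1) P :=
    hbdd _ ((hX'm.dist hXb'm).min measurable_const) fun ω => min_dist_one_bound _ _
  have hI0A : Integrable (fun ω => (g0 ∘ τr) ω * (φA ∘ T) ω) P := by
    have := hi0A.integrable_mul hIg0 hIA
    exact this
  have hI1B1 : Integrable (fun ω => (g1 ∘ τr) ω * (φB1 ∘ T) ω) P := by
    have := hi1B1.integrable_mul hIg1 hIB1
    exact this
  have hI1B2 : Integrable (fun ω => (g1 ∘ τr) ω * (φB2 ∘ T) ω) P := by
    have := hi1B2.integrable_mul hIg1 hIB2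
    exact this
  have hIh : Integrable h P := hI0A.add (hI1B1.add hI1B2)
  -- main estimate
  have hmain : (∫ ω, min (dist (X' ω) (Xb' ω)) 1 ∂P) ≤ ∫ ω, h ω ∂P :=
    integral_mono_ae hILHS hIh hptwise
  -- compute ∫ h via independence
  have hsplit : (∫ ω, h ω ∂P) =
      (∫ ω, (g0 ∘ τr) ω * (φA ∘ T) ω ∂P) +
      ((∫ ω, (g1 ∘ τr) ω * (φB1 ∘ T) ω ∂P) +
        (∫ ω, (g1 ∘ τr) ω * (φB2 ∘ T) ω ∂P)) := by
    have hBC : Integrable (fun ω => (g1 ∘ τr) ω * (φB1 ∘ T) ω +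
        (g1 ∘ τr) ω * (φB2 ∘ T) ω) P := hI1B1.add hI1B2
    have hre : (∫ ω, h ω ∂P) = ∫ ω, ((g0 ∘ τr) ω * (φA ∘ T) ω +
        ((g1 ∘ τr) ω * (φB1 ∘ T) ω + (g1 ∘ τr) ω * (φB2 ∘ T) ω)) ∂P := rfl
    rw [hre, integral_add hI0A hBC, integral_add hI1B1 hI1B2]
  have hmul0A : (∫ ω, (g0 ∘ τr) ω * (φA ∘ T) ω ∂P) =
      (∫ ω, (g0 ∘ τr) ω ∂P) * ∫ ω, (φA ∘ T) ω ∂P := by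
    have := hi0A.integral_mul_eq_mul_integral hIg0.aestronglyMeasurable hIA.aestronglyMeasurable
    simpa [Pi.mul_apply] using this
  have hmul1B1 : (∫ ω, (g1 ∘ τr) ω * (φB1 ∘ T) ω ∂P) =
      (∫ ω, (g1 ∘ τr) ω ∂P) * ∫ ω, (φB1 ∘ T) ω ∂P := by
    have := hi1B1.integral_mul_eq_mul_integral hIg1.aestronglyMeasurable hIB1.aestronglyMeasurable
    simpa [Pi.mul_apply] using this
  have hmul1B2 : (∫ ω, (g1 ∘ τr) ω * (φB2 ∘ T) ω ∂P) =
      (∫ ω, (g1 ∘ τr) ω ∂P) * ∫ ω, (φB2 ∘ T) ω ∂P := by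
    have := hi1B2.integral_mul_eq_mul_integral hIg1.aestronglyMeasurable hIB2.aestronglyMeasurable
    simpa [Pi.mul_apply] using this
  -- identify the integrals
  have hAeq : (∫ ω, (φA ∘ T) ω ∂P) = ∫ ω, min (dist (X ω) (Xb ω)) 1 ∂P := rfl
  have hB1eq : (∫ ω, (φB1 ∘ T) ω ∂P) = ∫ ω, min (dist (Xs1 ω) (Xj1 ω)) 1 ∂P := rfl
  have hB2eq : (∫ ω, (φB2 ∘ T) ω ∂P) = ∫ ω, min (dist (Xs2 ω) (Xj2 ω)) 1 ∂P := rfl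
  calc (∫ ω, min (dist (X' ω) (Xb' ω)) 1 ∂P) ≤ ∫ ω, h ω ∂P := hmain
    _ = (1 - τ) * (∫ ω, min (dist (X ω) (Xb ω)) 1 ∂P) +
        (τ * (∫ ω, W1trunc (reweight F f)
          (wEmpMeas (gaWeights F fun i => x i ω) (fun i => x i ω)) ∂P) +
         τ * (∫ ω, W1trunc (reweight F f)
          (wEmpMeas (gaWeights F fun i => x i ω) (fun i => x i ω)) ∂P)) := by
      rw [hsplit, hmul0A, hmul1B1, hmul1B2, hint_g0, hint_g1, hAeq, hB1eq, hB2eq,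
        hopt1, hopt2]
    _ = (1 - τ) * (∫ ω, min (dist (X ω) (Xb ω)) 1 ∂P) +
        2 * τ * ∫ ω, W1trunc (reweight F f)
          (wEmpMeas (gaWeights F fun i => x i ω) (fun i => x i ω)) ∂P := by ring
end
end
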